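/- arXiv:1812.06495 — 2 statements merged into one kernel-verified Lean document; each statement's English description precedes it below -/
import Mathlib

section
/- Let Γ = ℤ/pℤ * ℤ/qℤ be the free product, with generators a (order p) and b (order q), and let ρ : Γ → GL(V) be a finite-dimensional complex representation with V^ρ = 0. Then the map sending v ∈ V to the 1-cocycle κ_v determined by κ_v(a) = ρ(a)v − v and κ_v(b) = 0 induces a surjective linear map V → H¹(Γ, ρ) with kernel V^A + V^B, where V^A = ker(ρ(a) − id) and V^B = ker(ρ(b) − id). In particular dim H¹(Γ, ρ) = dim V − dim V^A − dim V^B. -/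
/-- The submodule of 1-cocycles `κ : Γ → V` for a representation `ρ`. -/
def oneCocycles {Γ V : Type*} [Group Γ] [AddCommGroup V] [Module ℂ V]
    (ρ : Representation ℂ Γ V) : Submodule ℂ (Γ → V) where
  carrier := {κ | ∀ g h : Γ, κ (g * h) = ρ g (κ h) + κ g}
  add_mem' := by
    intro f₁ f₂ h₁ h₂ g h
    simp only [Pi.add_apply, h₁ g h, h₂ g h, map_add]
    abel
  zero_mem' := by intro g h; simp
  smul_mem' := by
    intro c f hf g h
    simp only [Pi.smul_apply, hf g h, map_smul, smul_add]

/-- The coboundary map `V → (Γ → V)`, `v ↦ (γ ↦ ρ(γ)v - v)`. -/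
def coboundary {Γ V : Type*} [Group Γ] [AddCommGroup V] [Module ℂ V]
    (ρ : Representation ℂ Γ V) : V →ₗ[ℂ] (Γ → V) where
  toFun v := fun γ => ρ γ v - v
  map_add' v w := by funext γ; simp only [map_add, Pi.add_apply]; abel
  map_smul' c v := by funext γ; simp [map_smul, smul_sub]

lemma coboundary_mem_oneCocycles {Γ V : Type*} [Group Γ] [AddCommGroup V] [Module ℂ V]
    (ρ : Representation ℂ Γ V) (v : V) : coboundary ρ v ∈ oneCocycles ρ := by
  intro g h
  simp only [coboundary, LinearMap.coe_mk, AddHom.coe_mk, map_mul, map_sub,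
    Module.End.mul_apply]
  abel

/-- First group cohomology `H¹(Γ, ρ)`: 1-cocycles modulo 1-coboundaries. -/
def H1 {Γ V : Type*} [Group Γ] [AddCommGroup V] [Module ℂ V]
    (ρ : Representation ℂ Γ V) : Type _ :=
  (oneCocycles ρ) ⧸ (LinearMap.range
    ((coboundary ρ).codRestrict (oneCocycles ρ) (coboundary_mem_oneCocycles ρ)))

noncomputable instance {Γ V : Type*} [Group Γ] [AddCommGroup V] [Module ℂ V]
    (ρ : Representation ℂ Γ V) : AddCommGroup (H1 ρ) :=
  inferInstanceAs (AddCommGroup ((oneCocycles ρ) ⧸ (LinearMap.range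
    ((coboundary ρ).codRestrict (oneCocycles ρ) (coboundary_mem_oneCocycles ρ)))))

noncomputable instance {Γ V : Type*} [Group Γ] [AddCommGroup V] [Module ℂ V]
    (ρ : Representation ℂ Γ V) : Module ℂ (H1 ρ) :=
  inferInstanceAs (Module ℂ ((oneCocycles ρ) ⧸ (LinearMap.range
    ((coboundary ρ).codRestrict (oneCocycles ρ) (coboundary_mem_oneCocycles ρ)))))

section Aux

variable {V : Type*} [AddCommGroup V] [Module ℂ V]

namespace Stmt11

lemma cocycle_one {Γ : Type*} [Group Γ] (ρ : Representation ℂ Γ V) {κ : Γ → V}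
    (hκ : κ ∈ oneCocycles ρ) : κ 1 = 0 := by
  have h := hκ 1 1
  simp only [one_mul, map_one, Module.End.one_apply] at h
  have := right_eq_add.mp h
  exact this

lemma cocycle_pow {Γ : Type*} [Group Γ] (ρ : Representation ℂ Γ V) {κ : Γ → V}
    (hκ : κ ∈ oneCocycles ρ) (g : Γ) (n : ℕ) :
    κ (g ^ n) = ∑ i ∈ Finset.range n, (ρ g ^ i) (κ g) := by
  induction n with
  | zero => simpa using cocycle_one ρ hκ
  | succ n ih =>
    rw [pow_succ', hκ g (g ^ n), ih, Finset.sum_range_succ', map_sum]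
    simp only [pow_succ', Module.End.mul_apply, pow_zero, Module.End.one_apply]

lemma cocycle_norm {Γ : Type*} [Group Γ] (ρ : Representation ℂ Γ V) {κ : Γ → V}
    (hκ : κ ∈ oneCocycles ρ) {g : Γ} {n : ℕ} (hg : g ^ n = 1) :
    ∑ i ∈ Finset.range n, (ρ g ^ i) (κ g) = 0 := by
  rw [← cocycle_pow ρ hκ, hg, cocycle_one ρ hκ]

lemma telescope (x : ℕ → V) (n : ℕ) :
    ∑ i ∈ Finset.range n, (i : ℂ) • (x (i + 1) - x i)
      = ((n : ℂ) - 1) • x n + x 0 - ∑ i ∈ Finset.range n, x i := by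
  induction n with
  | zero => simp
  | succ n ih =>
    rw [Finset.sum_range_succ, ih, Finset.sum_range_succ]
    push_cast
    module

lemma exists_sub (T : Module.End ℂ V) {n : ℕ} (hn : n ≠ 0) (hT : T ^ n = 1) {y : V}
    (hy : ∑ i ∈ Finset.range n, (T ^ i) y = 0) : ∃ w, T w - w = y := by
  have hn' : (n : ℂ) ≠ 0 := Nat.cast_ne_zero.mpr hn
  refine ⟨(n : ℂ)⁻¹ • ∑ i ∈ Finset.range n, (i : ℂ) • (T ^ i) y, ?_⟩
  have key := telescope (fun i => (T ^ i) y) n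
  simp only [pow_zero, Module.End.one_apply, hT] at key
  rw [hy, sub_zero] at key
  have hTy : T ((n : ℂ)⁻¹ • ∑ i ∈ Finset.range n, (i : ℂ) • (T ^ i) y)
      = (n : ℂ)⁻¹ • ∑ i ∈ Finset.range n, (i : ℂ) • (T ^ (i + 1)) y := by
    rw [map_smul, map_sum]
    congr 1
    refine Finset.sum_congr rfl fun i _ => ?_
    rw [map_smul, ← Module.End.mul_apply, ← pow_succ']
  rw [hTy, ← smul_sub, ← Finset.sum_sub_distrib]
  simp_rw [← smul_sub]
  rw [key]
  have h2 : ((n : ℂ) - 1) • y + y = (n : ℂ) • y := by module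
  rw [h2, inv_smul_smul₀ hn']

lemma zmod_gen {p : ℕ} [NeZero p] (g : Multiplicative (ZMod p)) :
    ∃ n : ℕ, (Multiplicative.ofAdd (1 : ZMod p)) ^ n = g := by
  refine ⟨(Multiplicative.toAdd g).val, ?_⟩
  rw [← ofAdd_nsmul, nsmul_eq_mul, mul_one, ZMod.natCast_rightInverse _]
  exact ofAdd_toAdd g

/-- Conjugation of a linear endomorphism by the translation by `v`. -/
def conjTrans (v : V) : Module.End ℂ V →* Function.End V where
  toFun T := fun w => T (w + v) - v
  map_one' := by
    funext w
    show (1 : Module.End ℂ V) (w + v) - v = w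
    simp
  map_mul' T S := by
    funext w
    show (T * S) (w + v) - v = T ((S (w + v) - v) + v) - v
    rw [sub_add_cancel, Module.End.mul_apply]

set_option linter.unusedSectionVars false

variable {p q : ℕ} [NeZero p] [NeZero q]

/-- The affine action associated to `v`: `inl`-part acts by translation-conjugated linear maps,
`inr`-part acts linearly. -/
def affHom (ρ : Representation ℂ (Monoid.Coprod (Multiplicative (ZMod p)) (Multiplicative (ZMod q))) V) (v : V) :
    Monoid.Coprod (Multiplicative (ZMod p)) (Multiplicative (ZMod q)) →* Function.End V :=
  Monoid.Coprod.lift ((conjTrans v).comp (MonoidHom.comp ρ Monoid.Coprod.inl))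
    ((conjTrans 0).comp (MonoidHom.comp ρ Monoid.Coprod.inr))

variable (ρ : Representation ℂ (Monoid.Coprod (Multiplicative (ZMod p)) (Multiplicative (ZMod q))) V)

/-- The 1-cocycle associated to `v`. -/
def kappa (v : V) : Monoid.Coprod (Multiplicative (ZMod p)) (Multiplicative (ZMod q)) → V :=
  fun g => affHom ρ v g 0

lemma affHom_inl (v : V) (m : Multiplicative (ZMod p)) :
    affHom ρ v (Monoid.Coprod.inl m) = conjTrans v (ρ (Monoid.Coprod.inl m)) := by
  rw [affHom, Monoid.Coprod.lift_apply_inl]; rfl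

lemma affHom_inr (v : V) (m : Multiplicative (ZMod q)) :
    affHom ρ v (Monoid.Coprod.inr m) = conjTrans 0 (ρ (Monoid.Coprod.inr m)) := by
  rw [affHom, Monoid.Coprod.lift_apply_inr]; rfl

lemma affHom_apply (v : V) (g : Monoid.Coprod (Multiplicative (ZMod p)) (Multiplicative (ZMod q))) :
    ∀ w, affHom ρ v g w = ρ g w + affHom ρ v g 0 := by
  induction g using Monoid.Coprod.induction_on with
  | inl m =>
    intro w
    rw [affHom_inl]
    show ρ (Monoid.Coprod.inl m) (w + v) - v
      = ρ (Monoid.Coprod.inl m) w + (ρ (Monoid.Coprod.inl m) (0 + v) - v)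
    rw [zero_add, map_add]
    abel
  | inr n =>
    intro w
    rw [affHom_inr]
    show ρ (Monoid.Coprod.inr n) (w + 0) - 0
      = ρ (Monoid.Coprod.inr n) w + (ρ (Monoid.Coprod.inr n) (0 + 0) - 0)
    simp
  | mul x y hx hy =>
    intro w
    rw [map_mul]
    show affHom ρ v x (affHom ρ v y w) = ρ (x * y) w + affHom ρ v x (affHom ρ v y 0)
    rw [hy w, hx (ρ y w + affHom ρ v y 0), hx (affHom ρ v y 0), map_mul, map_add,
      Module.End.mul_apply]
    abel

lemma kappa_mem (v : V) : kappa ρ v ∈ oneCocycles ρ := by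
  intro g h
  show affHom ρ v (g * h) 0 = ρ g (kappa ρ v h) + kappa ρ v g
  rw [map_mul]
  show affHom ρ v g (affHom ρ v h 0) = _
  rw [affHom_apply ρ v g (affHom ρ v h 0)]
  rfl

lemma kappa_inl (v : V) (m : Multiplicative (ZMod p)) :
    kappa ρ v (Monoid.Coprod.inl m) = ρ (Monoid.Coprod.inl m) v - v := by
  show affHom ρ v (Monoid.Coprod.inl m) 0 = _
  rw [affHom_inl]
  show ρ (Monoid.Coprod.inl m) (0 + v) - v = _
  rw [zero_add]

lemma kappa_inr (v : V) (m : Multiplicative (ZMod q)) :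
    kappa ρ v (Monoid.Coprod.inr m) = 0 := by
  show affHom ρ v (Monoid.Coprod.inr m) 0 = _
  rw [affHom_inr]
  show ρ (Monoid.Coprod.inr m) (0 + 0) - 0 = 0
  simp

lemma cocycle_eq_zero {κ : Monoid.Coprod (Multiplicative (ZMod p)) (Multiplicative (ZMod q)) → V}
    (hκ : κ ∈ oneCocycles ρ)
    (hA : κ (Monoid.Coprod.inl (Multiplicative.ofAdd (1 : ZMod p))) = 0)
    (hB : κ (Monoid.Coprod.inr (Multiplicative.ofAdd (1 : ZMod q))) = 0) :
    κ = 0 := by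
  have hpow : ∀ (g : Monoid.Coprod (Multiplicative (ZMod p)) (Multiplicative (ZMod q))),
      κ g = 0 → ∀ n : ℕ, κ (g ^ n) = 0 := by
    intro g hg n
    rw [cocycle_pow ρ hκ]
    simp [hg]
  funext g
  show κ g = 0
  induction g using Monoid.Coprod.induction_on with
  | inl m =>
    obtain ⟨n, rfl⟩ := zmod_gen m
    rw [map_pow]
    exact hpow _ hA n
  | inr m =>
    obtain ⟨n, rfl⟩ := zmod_gen m
    rw [map_pow]
    exact hpow _ hB n
  | mul x y hx hy =>
    rw [hκ x y, hx, hy]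
    simp

end Stmt11
end Aux

open Stmt11 in
/-- For `Γ = ℤ/pℤ ∗ ℤ/qℤ` and `ρ : Γ → GL(V)` finite-dimensional over `ℂ` with no
nonzero fixed vectors, the map `v ↦ [κ_v]`, where `κ_v` is the 1-cocycle with
`κ_v(a) = ρ(a)v - v` and `κ_v(b) = 0`, is a surjective linear map `V → H¹(Γ, ρ)` with
kernel `V^A + V^B`; in particular `dim H¹(Γ, ρ) = dim V - dim V^A - dim V^B`. -/
theorem stmt_11 (p q : ℕ) [NeZero p] [NeZero q] {V : Type*}
    [AddCommGroup V] [Module ℂ V] [FiniteDimensional ℂ V]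
    (ρ : Representation ℂ (Monoid.Coprod (Multiplicative (ZMod p)) (Multiplicative (ZMod q))) V)
    (hfix : ∀ v : V, (∀ γ, ρ γ v = v) → v = 0)
    (a b : Monoid.Coprod (Multiplicative (ZMod p)) (Multiplicative (ZMod q)))
    (ha : a = Monoid.Coprod.inl (Multiplicative.ofAdd (1 : ZMod p)))
    (hb : b = Monoid.Coprod.inr (Multiplicative.ofAdd (1 : ZMod q))) :
    ∃ φ : V →ₗ[ℂ] H1 ρ,
      (∀ v : V, ∃ κ : oneCocycles ρ,
          (κ : _ → V) a = ρ a v - v ∧ (κ : _ → V) b = 0 ∧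
          φ v = Submodule.Quotient.mk κ) ∧
      Function.Surjective φ ∧
      LinearMap.ker φ
        = LinearMap.ker (ρ a - LinearMap.id) ⊔ LinearMap.ker (ρ b - LinearMap.id) ∧
      Module.finrank ℂ (H1 ρ)
        = Module.finrank ℂ V
          - Module.finrank ℂ (LinearMap.ker (ρ a - LinearMap.id))
          - Module.finrank ℂ (LinearMap.ker (ρ b - LinearMap.id)) := by
  classical
  subst ha hb
  set Z := LinearMap.range ((coboundary ρ).codRestrict (oneCocycles ρ)
    (coboundary_mem_oneCocycles ρ)) with hZ
  set a : Monoid.Coprod (Multiplicative (ZMod p)) (Multiplicative (ZMod q)) :=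
    Monoid.Coprod.inl (Multiplicative.ofAdd (1 : ZMod p)) with ha
  set b : Monoid.Coprod (Multiplicative (ZMod p)) (Multiplicative (ZMod q)) :=
    Monoid.Coprod.inr (Multiplicative.ofAdd (1 : ZMod q)) with hb
  set A := LinearMap.ker (ρ a - LinearMap.id) with hA
  set B := LinearMap.ker (ρ b - LinearMap.id) with hB
  -- order facts
  have ha_ord : a ^ p = 1 := by
    rw [ha, ← map_pow, ← ofAdd_nsmul]
    simp [nsmul_eq_mul, ZMod.natCast_self]
  have hb_ord : b ^ q = 1 := by
    rw [hb, ← map_pow, ← ofAdd_nsmul]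
    simp [nsmul_eq_mul, ZMod.natCast_self]
  have hapow : (ρ a) ^ p = 1 := by rw [← map_pow, ha_ord, map_one]
  have hbpow : (ρ b) ^ q = 1 := by rw [← map_pow, hb_ord, map_one]
  -- kappa values at a, b
  have kva : ∀ v : V, kappa ρ v a = ρ a v - v := fun v => kappa_inl ρ v _
  have kvb : ∀ v : V, kappa ρ v b = 0 := fun v => kappa_inr ρ v _
  -- membership in A, B
  have memA : ∀ v : V, v ∈ A ↔ ρ a v = v := by
    intro v
    rw [hA, LinearMap.mem_ker, LinearMap.sub_apply, LinearMap.id_apply, sub_eq_zero]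
  have memB : ∀ v : V, v ∈ B ↔ ρ b v = v := by
    intro v
    rw [hB, LinearMap.mem_ker, LinearMap.sub_apply, LinearMap.id_apply, sub_eq_zero]
  -- linearity of kappa
  have hkadd : ∀ v w : V, kappa ρ (v + w) = kappa ρ v + kappa ρ w := by
    intro v w
    have h := cocycle_eq_zero ρ (κ := kappa ρ (v + w) - (kappa ρ v + kappa ρ w))
      (Submodule.sub_mem _ (kappa_mem ρ _)
        (Submodule.add_mem _ (kappa_mem ρ _) (kappa_mem ρ _)))
      (by
        show kappa ρ (v + w) a - (kappa ρ v a + kappa ρ w a) = 0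
        rw [kva, kva, kva, map_add]; abel)
      (by
        show kappa ρ (v + w) b - (kappa ρ v b + kappa ρ w b) = 0
        rw [kvb, kvb, kvb]; abel)
    exact sub_eq_zero.mp h
  have hksmul : ∀ (c : ℂ) (v : V), kappa ρ (c • v) = c • kappa ρ v := by
    intro c v
    have h := cocycle_eq_zero ρ (κ := kappa ρ (c • v) - c • kappa ρ v)
      (Submodule.sub_mem _ (kappa_mem ρ _) (Submodule.smul_mem _ _ (kappa_mem ρ _)))
      (by
        show kappa ρ (c • v) a - c • kappa ρ v a = 0
        rw [kva, kva, map_smul, smul_sub]; abel)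
      (by
        show kappa ρ (c • v) b - c • kappa ρ v b = 0
        rw [kvb, kvb, smul_zero, sub_zero])
    exact sub_eq_zero.mp h
  let ψ : V →ₗ[ℂ] oneCocycles ρ :=
    { toFun := fun v => ⟨kappa ρ v, kappa_mem ρ v⟩
      map_add' := fun v w => Subtype.ext (hkadd v w)
      map_smul' := fun c v => Subtype.ext (hksmul c v) }
  let φ : V →ₗ[ℂ] H1 ρ := Z.mkQ.comp ψ
  have hφ : ∀ v : V, φ v = Submodule.Quotient.mk (ψ v) := fun v => rfl
  -- surjectivity
  have hsurj : Function.Surjective φ := by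
    intro c
    obtain ⟨⟨f, hf⟩, rfl⟩ := Submodule.Quotient.mk_surjective Z c
    have hnormb : ∑ i ∈ Finset.range q, ((ρ b) ^ i) (f b) = 0 := cocycle_norm ρ hf hb_ord
    obtain ⟨w, hw⟩ := exists_sub (ρ b) (NeZero.ne q) hbpow hnormb
    set f' := f - coboundary ρ w with hf'def
    have hf' : f' ∈ oneCocycles ρ := Submodule.sub_mem _ hf (coboundary_mem_oneCocycles ρ w)
    have hf'b : f' b = 0 := by
      show f b - (ρ b w - w) = 0
      rw [hw, sub_self]
    have hnorma : ∑ i ∈ Finset.range p, ((ρ a) ^ i) (f' a) = 0 := cocycle_norm ρ hf' ha_ord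
    obtain ⟨v, hv⟩ := exists_sub (ρ a) (NeZero.ne p) hapow hnorma
    have hkv : kappa ρ v = f' := by
      have h := cocycle_eq_zero ρ (κ := kappa ρ v - f')
        (Submodule.sub_mem _ (kappa_mem ρ v) hf')
        (by show kappa ρ v a - f' a = 0; rw [kva, hv, sub_self])
        (by show kappa ρ v b - f' b = 0; rw [kvb, hf'b, sub_self])
      exact sub_eq_zero.mp h
    refine ⟨v, ?_⟩
    rw [hφ]
    refine (Submodule.Quotient.eq Z).mpr ?_
    refine ⟨-w, Subtype.ext ?_⟩
    show coboundary ρ (-w) = kappa ρ v - f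
    rw [map_neg, hkv, hf'def]
    abel
  -- kernel
  have hker : LinearMap.ker φ = A ⊔ B := by
    apply le_antisymm
    · intro v hv
      rw [LinearMap.mem_ker, hφ] at hv
      replace hv := (Submodule.Quotient.mk_eq_zero Z).mp hv
      obtain ⟨w, hw⟩ := hv
      have hwval : coboundary ρ w = kappa ρ v := congrArg Subtype.val hw
      have hwB : w ∈ B := by
        rw [memB]
        have h1 : ρ b w - w = kappa ρ v b := congrFun hwval b
        rw [kvb] at h1
        exact sub_eq_zero.mp h1
      have hvwA : v - w ∈ A := by
        rw [memA]
        have h2 : ρ a w - w = kappa ρ v a := congrFun hwval a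
        rw [kva] at h2
        rw [map_sub]
        have h3 : ρ a v - ρ a w - (v - w) = (ρ a v - v) - (ρ a w - w) := by abel
        rw [← h2, sub_self] at h3
        exact sub_eq_zero.mp h3
      have hsum := Submodule.add_mem_sup hvwA hwB
      rwa [sub_add_cancel] at hsum
    · rw [sup_le_iff]
      constructor
      · intro u hu
        rw [memA] at hu
        rw [LinearMap.mem_ker, hφ]
        refine (Submodule.Quotient.mk_eq_zero Z).mpr ?_
        refine ⟨0, Subtype.ext ?_⟩
        show coboundary ρ 0 = kappa ρ u
        rw [map_zero]
        symm
        exact cocycle_eq_zero ρ (kappa_mem ρ u)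
          (by show kappa ρ u a = 0; rw [kva, hu, sub_self])
          (kvb u)
      · intro w hw
        rw [memB] at hw
        rw [LinearMap.mem_ker, hφ]
        refine (Submodule.Quotient.mk_eq_zero Z).mpr ?_
        refine ⟨w, Subtype.ext ?_⟩
        show coboundary ρ w = kappa ρ w
        symm
        have h := cocycle_eq_zero ρ (κ := kappa ρ w - coboundary ρ w)
          (Submodule.sub_mem _ (kappa_mem ρ w) (coboundary_mem_oneCocycles ρ w))
          (by
            show kappa ρ w a - (ρ a w - w) = 0
            rw [kva, sub_self])
          (by
            show kappa ρ w b - (ρ b w - w) = 0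
            rw [kvb, hw, sub_self, sub_zero])
        exact sub_eq_zero.mp h
  -- trivial intersection
  have hABbot : A ⊓ B = ⊥ := by
    rw [eq_bot_iff]
    intro v hv
    obtain ⟨hvA, hvB⟩ := Submodule.mem_inf.mp hv
    rw [memA] at hvA
    rw [memB] at hvB
    have hfixpow : ∀ (g : Monoid.Coprod (Multiplicative (ZMod p)) (Multiplicative (ZMod q))),
        ρ g v = v → ∀ n : ℕ, ρ (g ^ n) v = v := by
      intro g hg n
      rw [map_pow, Module.End.pow_apply]
      exact Function.iterate_fixed hg n
    have hv0 : v = 0 := by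
      refine hfix v ?_
      intro γ
      induction γ using Monoid.Coprod.induction_on with
      | inl m =>
        obtain ⟨n, rfl⟩ := zmod_gen m
        rw [map_pow]
        exact hfixpow _ hvA n
      | inr m =>
        obtain ⟨n, rfl⟩ := zmod_gen m
        rw [map_pow]
        exact hfixpow _ hvB n
      | mul x y hx hy =>
        rw [map_mul, Module.End.mul_apply, hy, hx]
    simp [hv0]
  -- dimensions
  haveI hfinH1 : Module.Finite ℂ (H1 ρ) := Module.Finite.of_surjective φ hsurj
  have hrank := LinearMap.finrank_range_add_finrank_ker φ
  rw [LinearMap.range_eq_top.mpr hsurj, finrank_top] at hrank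
  have hABrank : Module.finrank ℂ (LinearMap.ker φ)
      = Module.finrank ℂ A + Module.finrank ℂ B := by
    rw [hker]
    have h := Submodule.finrank_sup_add_finrank_inf_eq A B
    rw [hABbot, finrank_bot] at h
    omega
  refine ⟨φ, fun v => ⟨ψ v, kva v, kvb v, hφ v⟩, hsurj, hker, ?_⟩
  omega
end

section
/- Let Γ = ℤ/pℤ * ℤ/qℤ with generators a, b of orders p, q. For any representation ρ : Γ → GL(V) and any pair of vectors (u, w) ∈ V × V with ∑_{j=0}^{p−1} ρ(a)ʲ u = 0 and ∑_{j=0}^{q−1} ρ(b)ʲ w = 0, there exists a unique 1-cocycle κ : Γ → V with κ(a) = u and κ(b) = w. -/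
section Aux

variable {Γ V : Type*} [Monoid Γ] [AddCommGroup V] [Module ℂ V]

/-- Semidirect-product-like monoid for encoding cocycles. -/
def SD (_ρ : Representation ℂ Γ V) : Type _ := V × Γ

namespace SD

variable (ρ : Representation ℂ Γ V)

instance : Monoid (SD ρ) where
  mul x y := (x.1 + ρ x.2 y.1, x.2 * y.2)
  one := ((0 : V), (1 : Γ))
  mul_assoc x y z := by
    refine Prod.ext ?_ ?_
    · show (x.1 + ρ x.2 y.1) + ρ (x.2 * y.2) z.1 = x.1 + ρ x.2 (y.1 + ρ y.2 z.1)
      rw [map_mul, map_add, Module.End.mul_apply, add_assoc]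
    · exact mul_assoc x.2 y.2 z.2
  one_mul x := by
    refine Prod.ext ?_ ?_
    · show 0 + ρ 1 x.1 = x.1
      rw [map_one, zero_add, Module.End.one_apply]
    · exact one_mul x.2
  mul_one x := by
    refine Prod.ext ?_ ?_
    · show x.1 + ρ x.2 0 = x.1
      rw [map_zero, add_zero]
    · exact mul_one x.2

theorem mul_def (x y : SD ρ) : x * y = (x.1 + ρ x.2 y.1, x.2 * y.2) := rfl

theorem one_def : (1 : SD ρ) = ((0 : V), (1 : Γ)) := rfl

end SD

/-- Partial sums `∑_{j<k} ρ(g)^j v`. -/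
def Spow (ρ : Representation ℂ Γ V) (g : Γ) (v : V) (k : ℕ) : V :=
  ∑ j ∈ Finset.range k, ((ρ g) ^ j) v

variable (ρ : Representation ℂ Γ V) (g : Γ) (v : V)

theorem Spow_succ (k : ℕ) : Spow ρ g v (k + 1) = Spow ρ g v k + ((ρ g) ^ k) v :=
  Finset.sum_range_succ _ _

theorem Spow_add (m n : ℕ) :
    Spow ρ g v (m + n) = Spow ρ g v m + ((ρ g) ^ m) (Spow ρ g v n) := by
  induction n with
  | zero => simp [Spow]
  | succ n ih =>
      rw [← Nat.add_assoc, Spow_succ, ih, Spow_succ, map_add, ← Module.End.mul_apply,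
        ← pow_add, add_assoc]

variable {p : ℕ}

theorem Spow_mod (hv : Spow ρ g v p = 0) (k : ℕ) : Spow ρ g v k = Spow ρ g v (k % p) := by
  conv_lhs => rw [← Nat.mod_add_div k p]
  generalize k / p = t
  induction t with
  | zero => simp
  | succ t ih =>
      rw [Nat.mul_succ, ← Nat.add_assoc, Nat.add_comm (k % p + p * t) p, ← Nat.add_assoc]
      rw [Nat.add_comm p (k % p), Nat.add_assoc, Nat.add_comm p (p*t), ← Nat.add_assoc] at *
      rw [Spow_add, hv, map_zero, add_zero, ih]

theorem pow_mod_eq (hg : g ^ p = 1) (k : ℕ) : g ^ k = g ^ (k % p) := by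
  conv_lhs => rw [← Nat.mod_add_div k p, pow_add, pow_mul, hg, one_pow, mul_one]

variable [NeZero p]

/-- The monoid hom from a cyclic group into the semidirect product. -/
def cycHom (hg : g ^ p = 1) (hv : Spow ρ g v p = 0) :
    Multiplicative (ZMod p) →* SD ρ where
  toFun m := (Spow ρ g v (Multiplicative.toAdd m).val, g ^ (Multiplicative.toAdd m).val)
  map_one' := by
    rw [SD.one_def]
    simp [Spow]
    rfl
  map_mul' m n := by
    refine Eq.trans ?_ (SD.mul_def ρ _ _).symm
    refine Prod.ext ?_ ?_
    · show Spow ρ g v (Multiplicative.toAdd m + Multiplicative.toAdd n).val = _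
      rw [ZMod.val_add, ← Spow_mod ρ g v hv, Spow_add, map_pow]
    · show g ^ (Multiplicative.toAdd m + Multiplicative.toAdd n).val = _
      rw [ZMod.val_add, ← pow_mod_eq g hg, pow_add]

theorem Spow_val_one (hv : Spow ρ g v p = 0) : Spow ρ g v ((1 : ZMod p).val) = v := by
  rcases eq_or_lt_of_le (Nat.one_le_iff_ne_zero.2 (NeZero.ne p)) with h | h
  · have hp : p = 1 := h.symm
    subst hp
    have : v = 0 := by simpa [Spow] using hv
    simp [this, Spow, Subsingleton.elim (1 : ZMod 1) 0]
  · rw [ZMod.val_one_eq_one_mod, Nat.mod_eq_of_lt h]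
    simp [Spow]

/-- Any cocycle is determined on powers of a generator. -/
theorem cocycle_pow {κ : Γ → V} (hκ : ∀ x y : Γ, κ (x * y) = ρ x (κ y) + κ x)
    (hg : κ g = v) (n : ℕ) : κ (g ^ n) = Spow ρ g v n := by
  induction n with
  | zero =>
      have h1 : κ 1 = 0 := by
        have := hκ 1 1
        rw [mul_one, map_one] at this
        simpa using this.symm
      simpa [Spow] using h1
  | succ n ih =>
      rw [pow_succ, hκ, ih, hg, Spow_succ, map_pow, add_comm]

end Aux

theorem inl_eq_pow {p : ℕ} [NeZero p] {N : Type*} [Monoid N] (m : Multiplicative (ZMod p)) :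
    (Monoid.Coprod.inl m : Monoid.Coprod (Multiplicative (ZMod p)) N)
      = (Monoid.Coprod.inl (Multiplicative.ofAdd (1 : ZMod p))) ^ (Multiplicative.toAdd m).val := by
  rw [← map_pow]
  congr 1
  rw [← ofAdd_nsmul, nsmul_eq_mul, mul_one, ZMod.natCast_val, ZMod.cast_id,
    ofAdd_toAdd]

theorem inr_eq_pow {q : ℕ} [NeZero q] {M : Type*} [Monoid M] (m : Multiplicative (ZMod q)) :
    (Monoid.Coprod.inr m : Monoid.Coprod M (Multiplicative (ZMod q)))
      = (Monoid.Coprod.inr (Multiplicative.ofAdd (1 : ZMod q))) ^ (Multiplicative.toAdd m).val := by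
  rw [← map_pow]
  congr 1
  rw [← ofAdd_nsmul, nsmul_eq_mul, mul_one, ZMod.natCast_val, ZMod.cast_id,
    ofAdd_toAdd]



/-- For `Γ = ℤ/pℤ ∗ ℤ/qℤ` with generators `a` (order `p`) and `b` (order `q`), and any
representation `ρ : Γ → GL(V)`, any pair of vectors `u, w ∈ V` with
`∑_{j=0}^{p-1} ρ(a)ʲ u = 0` and `∑_{j=0}^{q-1} ρ(b)ʲ w = 0` extends to a unique
1-cocycle `κ : Γ → V` with `κ(a) = u` and `κ(b) = w`. -/
theorem stmt_12 (p q : ℕ) [NeZero p] [NeZero q] {V : Type*}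
    [AddCommGroup V] [Module ℂ V]
    (ρ : Representation ℂ (Monoid.Coprod (Multiplicative (ZMod p)) (Multiplicative (ZMod q))) V)
    (a b : Monoid.Coprod (Multiplicative (ZMod p)) (Multiplicative (ZMod q)))
    (ha : a = Monoid.Coprod.inl (Multiplicative.ofAdd (1 : ZMod p)))
    (hb : b = Monoid.Coprod.inr (Multiplicative.ofAdd (1 : ZMod q)))
    (u w : V)
    (hu : ∑ j ∈ Finset.range p, ((ρ a) ^ j) u = 0)
    (hw : ∑ j ∈ Finset.range q, ((ρ b) ^ j) w = 0) :
    ∃! κ : oneCocycles ρ, (κ : _ → V) a = u ∧ (κ : _ → V) b = w := by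

  have hap : a ^ p = 1 := by
    rw [ha, ← map_pow, ← ofAdd_nsmul]
    simp [nsmul_eq_mul, ZMod.natCast_self]
  have hbq : b ^ q = 1 := by
    rw [hb, ← map_pow, ← ofAdd_nsmul]
    simp [nsmul_eq_mul, ZMod.natCast_self]
  have hu' : Spow ρ a u p = 0 := hu
  have hw' : Spow ρ b w q = 0 := hw
  set H := Monoid.Coprod.lift (cycHom ρ a u hap hu') (cycHom ρ b w hbq hw') with hH
  set π : SD ρ →* Monoid.Coprod (Multiplicative (ZMod p)) (Multiplicative (ZMod q)) :=
    ⟨⟨fun x => x.2, rfl⟩, fun _ _ => rfl⟩ with hπdef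
  -- second component of H is identity
  have hsnd : ∀ g, (H g).2 = g := by
    have hπ : π.comp H = MonoidHom.id _ := by
      refine Monoid.Coprod.hom_ext ?_ ?_
      · refine MonoidHom.ext fun m => ?_
        show (H (Monoid.Coprod.inl m)).2 = Monoid.Coprod.inl m
        rw [hH, Monoid.Coprod.lift_apply_inl]
        show a ^ (Multiplicative.toAdd m).val = _
        rw [ha, ← inl_eq_pow]
      · refine MonoidHom.ext fun m => ?_
        show (H (Monoid.Coprod.inr m)).2 = Monoid.Coprod.inr m
        rw [hH, Monoid.Coprod.lift_apply_inr]
        show b ^ (Multiplicative.toAdd m).val = _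
        rw [hb, ← inr_eq_pow]
    intro g
    exact DFunLike.congr_fun hπ g
  set κ : Monoid.Coprod (Multiplicative (ZMod p)) (Multiplicative (ZMod q)) → V :=
    fun g => (H g).1 with hκdef
  have hκcoc : ∀ g h, κ (g * h) = ρ g (κ h) + κ g := by
    intro g h
    show (H (g * h)).1 = _
    rw [map_mul, SD.mul_def, hsnd]
    exact add_comm _ _
  have hκa : κ a = u := by
    show (H a).1 = u
    rw [ha, hH, Monoid.Coprod.lift_apply_inl]
    show Spow ρ a u (Multiplicative.toAdd (Multiplicative.ofAdd (1 : ZMod p))).val = u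
    simpa using Spow_val_one ρ a u hu'
  have hκb : κ b = w := by
    show (H b).1 = w
    rw [hb, hH, Monoid.Coprod.lift_apply_inr]
    show Spow ρ b w (Multiplicative.toAdd (Multiplicative.ofAdd (1 : ZMod q))).val = w
    simpa using Spow_val_one ρ b w hw'
  refine ⟨⟨κ, hκcoc⟩, ⟨hκa, hκb⟩, ?_⟩
  rintro ⟨κ', hκ'⟩ ⟨hκ'a, hκ'b⟩
  have hκ'coc : ∀ g h, κ' (g * h) = ρ g (κ' h) + κ' g := hκ'
  apply Subtype.ext
  funext g
  show κ' g = κ g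
  induction g using Monoid.Coprod.induction_on with
  | inl m =>
      rw [show (Monoid.Coprod.inl m : Monoid.Coprod (Multiplicative (ZMod p)) (Multiplicative (ZMod q))) = a ^ (Multiplicative.toAdd m).val from
        ha ▸ inl_eq_pow m]
      rw [cocycle_pow ρ a u hκ'coc hκ'a, cocycle_pow ρ a u hκcoc hκa]
  | inr m =>
      rw [show (Monoid.Coprod.inr m : Monoid.Coprod (Multiplicative (ZMod p)) (Multiplicative (ZMod q))) = b ^ (Multiplicative.toAdd m).val from
        hb ▸ inr_eq_pow m]
      rw [cocycle_pow ρ b w hκ'coc hκ'b, cocycle_pow ρ b w hκcoc hκb]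
  | mul x y hx hy =>
      rw [hκ'coc, hκcoc, hx, hy]
end
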